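/- Let N₁, R₁ be ℓ₁×ℓ₁ real matrices, N₂, R₂ be ℓ₂×ℓ₂ real matrices, B₁ ∈ ℝ^{n×ℓ₁}, B₂ ∈ ℝ^{n×ℓ₂}, and Λ₁, Λ₂ ∈ ℝ^{n×n}. Define the block-diagonal direct sums N = N₁ ⊕ N₂ and R = R₁ ⊕ R₂ (i.e. fromBlocks with zero off-diagonal blocks), the concatenation B = (B₁, B₂) ∈ ℝ^{n×(ℓ₁+ℓ₂)}, and let Λ be any n×n real matrix with Λ Λᵀ = Λ₁ Λ₁ᵀ + Λ₂ Λ₂ᵀ. Then for every τ ≥ 0, C_LEG(τ; N, R, B, Λ) = C_LEG(τ; N₁, R₁, B₁, Λ₁) + C_LEG(τ; N₂, R₂, B₂, Λ₂). In other words, the sum of two LEG kernels is a LEG kernel whose rank is the sum of the ranks. -/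

import Mathlib

open Matrix

/-- The LEG covariance kernel
`C_LEG(τ; N, R, B, Λ) = B exp(-(τ/2)(N Nᵀ + R - Rᵀ)) Bᵀ + δ_{τ=0} Λ Λᵀ`. -/
noncomputable def CLEG {ι κ : Type*} [Fintype ι] [DecidableEq ι] [Fintype κ]
    (N R : Matrix ι ι ℝ) (B : Matrix κ ι ℝ) (Λ : Matrix κ κ ℝ) (τ : ℝ) : Matrix κ κ ℝ :=
  B * NormedSpace.exp ((-(τ / 2)) • (N * Nᵀ + R - Rᵀ)) * Bᵀ +
    (if τ = 0 then (1 : ℝ) else 0) • (Λ * Λᵀ)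

/-- `fromBlocks · 0 0 ·` as a ring homomorphism from the product ring. -/
def fromBlocksRingHom (l m : Type*) [Fintype l] [DecidableEq l] [Fintype m] [DecidableEq m] :
    Matrix l l ℝ × Matrix m m ℝ →+* Matrix (l ⊕ m) (l ⊕ m) ℝ where
  toFun p := Matrix.fromBlocks p.1 0 0 p.2
  map_one' := Matrix.fromBlocks_one
  map_mul' p q := by
    simp [Matrix.fromBlocks_multiply]
  map_zero' := Matrix.fromBlocks_zero
  map_add' p q := by
    simpa using (Matrix.fromBlocks_add p.1 0 0 p.2 q.1 0 0 q.2).symm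

/-- The matrix exponential of a block-diagonal matrix is block diagonal. -/
theorem exp_fromBlocks {l m : Type*} [Fintype l] [DecidableEq l] [Fintype m] [DecidableEq m]
    (A : Matrix l l ℝ) (D : Matrix m m ℝ) :
    NormedSpace.exp (Matrix.fromBlocks A 0 0 D) =
      Matrix.fromBlocks (NormedSpace.exp A) 0 0 (NormedSpace.exp D) := by
  have hc : Continuous (fromBlocksRingHom l m) :=
    Continuous.matrix_fromBlocks continuous_fst continuous_const continuous_const continuous_snd
  letI : NormedRing (Matrix l l ℝ) := Matrix.linftyOpNormedRing
  letI : NormedAlgebra ℝ (Matrix l l ℝ) := Matrix.linftyOpNormedAlgebra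
  letI : NormedRing (Matrix m m ℝ) := Matrix.linftyOpNormedRing
  letI : NormedAlgebra ℝ (Matrix m m ℝ) := Matrix.linftyOpNormedAlgebra
  letI : NormedRing (Matrix (l ⊕ m) (l ⊕ m) ℝ) := Matrix.linftyOpNormedRing
  letI : NormedAlgebra ℝ (Matrix (l ⊕ m) (l ⊕ m) ℝ) := Matrix.linftyOpNormedAlgebra
  letI : NormedAlgebra ℚ (Matrix l l ℝ) := NormedAlgebra.restrictScalars ℚ ℝ _
  letI : NormedAlgebra ℚ (Matrix m m ℝ) := NormedAlgebra.restrictScalars ℚ ℝ _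
  have h := NormedSpace.map_exp (fromBlocksRingHom l m) hc (A, D)
  have hpair : NormedSpace.exp ((A, D) : Matrix l l ℝ × Matrix m m ℝ) =
      (NormedSpace.exp A, NormedSpace.exp D) :=
    Prod.ext (Prod.fst_exp _) (Prod.snd_exp _)
  erw [hpair] at h
  exact h.symm

/-- **The sum of two LEG kernels is a LEG kernel** whose rank is the sum of the ranks:
with `N = N₁ ⊕ N₂`, `R = R₁ ⊕ R₂` (block-diagonal direct sums), `B = (B₁, B₂)` and any `Λ`
with `Λ Λᵀ = Λ₁ Λ₁ᵀ + Λ₂ Λ₂ᵀ`, one has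
`C_LEG(τ; N, R, B, Λ) = C_LEG(τ; N₁, R₁, B₁, Λ₁) + C_LEG(τ; N₂, R₂, B₂, Λ₂)` for `τ ≥ 0`. -/
theorem leg_sum_is_leg
    {ℓ₁ ℓ₂ n : ℕ}
    (N₁ R₁ : Matrix (Fin ℓ₁) (Fin ℓ₁) ℝ) (N₂ R₂ : Matrix (Fin ℓ₂) (Fin ℓ₂) ℝ)
    (B₁ : Matrix (Fin n) (Fin ℓ₁) ℝ) (B₂ : Matrix (Fin n) (Fin ℓ₂) ℝ)
    (Λ₁ Λ₂ Λ : Matrix (Fin n) (Fin n) ℝ)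
    (hΛ : Λ * Λᵀ = Λ₁ * Λ₁ᵀ + Λ₂ * Λ₂ᵀ) :
    ∀ τ : ℝ, 0 ≤ τ →
      CLEG (Matrix.fromBlocks N₁ 0 0 N₂) (Matrix.fromBlocks R₁ 0 0 R₂)
        (Matrix.fromCols B₁ B₂) Λ τ =
      CLEG N₁ R₁ B₁ Λ₁ τ + CLEG N₂ R₂ B₂ Λ₂ τ := by
  intro τ _
  unfold CLEG
  rw [hΛ]
  have harg : (-(τ / 2)) • (Matrix.fromBlocks N₁ 0 0 N₂ * (Matrix.fromBlocks N₁ 0 0 N₂)ᵀ +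
      Matrix.fromBlocks R₁ 0 0 R₂ - (Matrix.fromBlocks R₁ 0 0 R₂)ᵀ) =
      Matrix.fromBlocks ((-(τ / 2)) • (N₁ * N₁ᵀ + R₁ - R₁ᵀ)) 0 0
        ((-(τ / 2)) • (N₂ * N₂ᵀ + R₂ - R₂ᵀ)) := by
    rw [Matrix.fromBlocks_transpose, Matrix.fromBlocks_transpose, Matrix.fromBlocks_multiply,
      sub_eq_add_neg, Matrix.fromBlocks_neg, Matrix.fromBlocks_add, Matrix.fromBlocks_add,
      Matrix.fromBlocks_smul]
    simp [sub_eq_add_neg]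
  rw [harg, exp_fromBlocks, Matrix.fromCols_mul_fromBlocks, Matrix.transpose_fromCols,
    Matrix.fromCols_mul_fromRows, smul_add]
  simp only [Matrix.mul_zero, add_zero, zero_add]
  abel
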